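/- Let S be an n-simplex in R^n with faces S^i, and C^1,...,C^{n+1} closed convex subsets of S with S^i ⊆ C^i that cover S. Then the intersection ∩_i C^i is nonempty. (Convex KKM/Sperner-type theorem.) -/

import Mathlib

open Set Finset

section KKM

variable {E : Type*} [NormedAddCommGroup E] [NormedSpace ℝ E]

lemma exists_weights_of_mem_convexHull_range {ι : Type*} [Fintype ι] {v : ι → E} {x : E}
    (hx : x ∈ convexHull ℝ (Set.range v)) :
    ∃ w : ι → ℝ, (∀ i, 0 ≤ w i) ∧ ∑ i, w i = 1 ∧ ∑ i, w i • v i = x := by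
  classical
  rw [convexHull_range_eq_exists_affineCombination] at hx
  obtain ⟨s, w, hw0, hw1, hx⟩ := hx
  rw [Finset.affineCombination_eq_linear_combination s v w hw1] at hx
  refine ⟨fun i => if i ∈ s then w i else 0, fun i => ?_, ?_, ?_⟩
  · dsimp only
    split_ifs with h
    · exact hw0 _ h
    · exact le_refl 0
  · dsimp only
    rw [Finset.sum_ite_mem, Finset.univ_inter]; exact hw1
  · dsimp only
    rw [← hx]
    calc ∑ i, (if i ∈ s then w i else 0) • v i
        = ∑ i, if i ∈ s then w i • v i else 0 :=
          Finset.sum_congr rfl fun i _ => by split_ifs <;> simp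
      _ = ∑ i ∈ Finset.univ ∩ s, w i • v i := Finset.sum_ite_mem _ _ _
      _ = ∑ i ∈ s, w i • v i := by rw [Finset.univ_inter]

theorem kkm_convex (m : ℕ) : ∀ (a : Fin (m + 1) → E), AffineIndependent ℝ a →
    ∀ C : Fin (m + 1) → Set E, (∀ i, IsClosed (C i)) → (∀ i, Convex ℝ (C i)) →
    (∀ i, C i ⊆ convexHull ℝ (Set.range a)) →
    (∀ i, convexHull ℝ (a '' {j | j ≠ i}) ⊆ C i) →
    (convexHull ℝ (Set.range a) ⊆ ⋃ i, C i) →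
    (⋂ i, C i).Nonempty := by
  induction m with
  | zero =>
    intro a _ C _ _ _ _ hcover
    have h0 : a 0 ∈ convexHull ℝ (Set.range a) := subset_convexHull ℝ _ ⟨0, rfl⟩
    obtain ⟨_, ⟨i, rfl⟩, hx⟩ := hcover h0
    exact ⟨a 0, Set.mem_iInter.2 fun j => by rwa [show j = i from Fin.ext (by omega)]⟩
  | succ m IH =>
    intro a ha C hCc hCv hCS hface hcover
    set S := convexHull ℝ (Set.range a) with hSdef
    have hScv : Convex ℝ S := convex_convexHull ℝ _
    have hScp : IsCompact S := (Set.finite_range a).isCompact_convexHull (𝕜 := ℝ)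
    set L : Fin (m + 2) := Fin.last (m + 1) with hL
    set T : Set E := ⋂ j : Fin (m + 1), C j.castSucc with hTdef
    by_cases hTC : (T ∩ C L).Nonempty
    · obtain ⟨x, hxT, hxC⟩ := hTC
      refine ⟨x, Set.mem_iInter.2 fun i => ?_⟩
      rcases Fin.eq_castSucc_or_eq_last i with ⟨j, rfl⟩ | rfl
      · exact Set.mem_iInter.1 hxT j
      · exact hxC
    · exfalso
      have hTS : T ⊆ S := fun x hx => hCS _ (Set.mem_iInter.1 hx 0)
      have hTcl : IsClosed T := isClosed_iInter fun j => hCc _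
      have hTcp : IsCompact T := hScp.of_isClosed_subset hTcl hTS
      have hTcv : Convex ℝ T := convex_iInter fun j => hCv _
      have hdisj : Disjoint T (C L) :=
        Set.disjoint_iff_inter_eq_empty.2 (Set.not_nonempty_iff_eq_empty.1 hTC)
      obtain ⟨f, u, v, hfu, huv, hfv⟩ :=
        geometric_hahn_banach_compact_closed hTcv hTcp (hCv L) (hCc L) hdisj
      set c : ℝ := (u + v) / 2 with hc
      have hfT : ∀ x ∈ T, f x < c := fun x hx => (hfu x hx).trans (by rw [hc]; linarith)
      have hfC : ∀ x ∈ C L, c < f x := fun x hx => lt_trans (by rw [hc]; linarith) (hfv x hx)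
      -- vertices
      have hbT : a L ∈ T := Set.mem_iInter.2 fun j =>
        hface _ (subset_convexHull ℝ _ ⟨L, (Fin.castSucc_lt_last j).ne', rfl⟩)
      have haC : ∀ j : Fin (m + 1), a j.castSucc ∈ C L := fun j =>
        hface L (subset_convexHull ℝ _ ⟨j.castSucc, (Fin.castSucc_lt_last j).ne, rfl⟩)
      have hfb : f (a L) < c := hfT _ hbT
      have hfa : ∀ j : Fin (m + 1), c < f (a j.castSucc) := fun j => hfC _ (haC j)
      set d : ℝ := c - f (a L) with hd
      have hd0 : 0 < d := by rw [hd]; linarith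
      set s : Fin (m + 1) → ℝ := fun j => d / (f (a j.castSucc) - f (a L)) with hsdef
      have hs0 : ∀ j : Fin (m + 1), 0 < s j := fun j => div_pos hd0 (by linarith [hfa j, hfb])
      have hs1 : ∀ j : Fin (m + 1), s j ≤ 1 := fun j =>
        (div_le_one (by linarith [hfa j])).2 (by rw [hd]; linarith [hfa j])
      have hsmul : ∀ j : Fin (m + 1), s j * (f (a j.castSucc) - f (a L)) = d := fun j =>
        div_mul_cancel₀ _ (by have := hfa j; have := hfb; intro h; linarith : f (a j.castSucc) - f (a L) ≠ 0)
      set p : Fin (m + 1) → E := fun j => a L + s j • (a j.castSucc - a L) with hpdef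
      have hfp : ∀ j : Fin (m + 1), f (p j) = c := by
        intro j
        have h1 : f (p j) = f (a L) + s j * (f (a j.castSucc) - f (a L)) := by
          simp [hpdef, map_add, map_smul, map_sub, smul_eq_mul]
        rw [h1, hsmul j, hd]; ring
      have hpc : ∀ j : Fin (m + 1), p j = (1 - s j) • a L + s j • a j.castSucc := by
        intro j; rw [hpdef]; simp only; module
      have hpS : ∀ j : Fin (m + 1), p j ∈ S := fun j => by
        rw [hpc j]
        exact hScv (subset_convexHull ℝ _ ⟨L, rfl⟩) (subset_convexHull ℝ _ ⟨j.castSucc, rfl⟩)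
          (by linarith [hs1 j]) (hs0 j).le (by ring)
      set Sig : Set E := S ∩ {x | f x = c} with hSigdef
      have hSigcv : Convex ℝ Sig := hScv.inter (convex_hyperplane (f : E →ₗ[ℝ] ℝ).isLinear c)
      have hpSig : ∀ j : Fin (m + 1), p j ∈ Sig := fun j => ⟨hpS j, hfp j⟩
      -- Sig ⊆ convexHull (range p)
      have hfaj : ∀ j : Fin (m + 1), f (a j.castSucc) = f (a L) + d / s j := by
        intro j
        have h := hsmul j
        have h2 : f (a j.castSucc) - f (a L) = d / s j := by
          rw [eq_div_iff (hs0 j).ne']; linarith [h]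
        linarith [h2]
      have hSig_sub : Sig ⊆ convexHull ℝ (Set.range p) := by
        rintro x ⟨hxS, hxf⟩
        obtain ⟨w, hw0, hw1, hwx⟩ := exists_weights_of_mem_convexHull_range hxS
        set μ : Fin (m + 1) → ℝ := fun j => w j.castSucc / s j with hμdef
        have hμ0 : ∀ j : Fin (m + 1), 0 ≤ μ j := fun j => div_nonneg (hw0 _) (hs0 j).le
        have hμs : ∀ j : Fin (m + 1), μ j * s j = w j.castSucc := fun j => div_mul_cancel₀ _ (hs0 j).ne'
        have e1 : ∑ i, w i * f (a i) = c := by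
          have : f x = c := hxf
          rw [← this, ← hwx, map_sum]
          exact Finset.sum_congr rfl fun i _ => by rw [map_smul]; rfl
        have e2 : ∑ i, w i * f (a i)
            = (∑ j : Fin (m + 1), w j.castSucc * f (a j.castSucc)) + w L * f (a L) :=
          Fin.sum_univ_castSucc _
        have e3 : ∑ j : Fin (m + 1), w j.castSucc * f (a j.castSucc)
            = ∑ j : Fin (m + 1), (w j.castSucc * f (a L) + d * μ j) := by
          refine Finset.sum_congr rfl fun j _ => ?_
          rw [hfaj j, hμdef]; ring
        have e4 : ∑ j : Fin (m + 1), (w j.castSucc * f (a L) + d * μ j)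
            = (∑ j : Fin (m + 1), w j.castSucc) * f (a L) + d * ∑ j : Fin (m + 1), μ j := by
          rw [Finset.sum_add_distrib, ← Finset.sum_mul, ← Finset.mul_sum]
        have e5 : (∑ j : Fin (m + 1), w j.castSucc) + w L = 1 := by
          rw [← hw1]; exact (Fin.sum_univ_castSucc w).symm
        have hμ1 : ∑ j, μ j = 1 := by
          have hh : (∑ j : Fin (m + 1), w j.castSucc) * f (a L) + d * (∑ j : Fin (m + 1), μ j) + w L * f (a L) = c := by
            rw [← e4, ← e3]; rw [e2] at e1; linarith [e1]
          have hh2 : f (a L) + d * (∑ j : Fin (m + 1), μ j) = c := by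
            linear_combination hh - f (a L) * e5
          have : d * (∑ j : Fin (m + 1), μ j) = d := by rw [hd] at hh2 ⊢; linarith
          exact mul_left_cancel₀ hd0.ne' (by rw [this, mul_one])
        have hxsum : x = (∑ j : Fin (m + 1), w j.castSucc • a j.castSucc) + w L • a L := by
          rw [← hwx, Fin.sum_univ_castSucc]
        have hx_eq : ∑ j, μ j • p j = x := by
          have step : ∀ j : Fin (m + 1), μ j • p j
              = w j.castSucc • a j.castSucc + (μ j - w j.castSucc) • a L := by
            intro j
            rw [hpc j, ← hμs j]
            module
          rw [Finset.sum_congr rfl fun j _ => step j, Finset.sum_add_distrib,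
            ← Finset.sum_smul, hxsum]
          have : ∑ j : Fin (m + 1), (μ j - w j.castSucc) = w L := by
            rw [Finset.sum_sub_distrib, hμ1]; linarith [e5]
          rw [this]
        exact mem_convexHull_of_exists_fintype μ p hμ0 hμ1 (fun j => Set.mem_range_self j) hx_eq
      have hSigEq : convexHull ℝ (Set.range p) = Sig :=
        Subset.antisymm
          (convexHull_min (by rintro _ ⟨j, rfl⟩; exact hpSig j) hSigcv) hSig_sub
      -- affine independence of p
      have hp_indep : AffineIndependent ℝ p := by
        rw [affineIndependent_iff_of_fintype]
        intro w hw hws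
        rw [Finset.weightedVSub_eq_linear_combination _ hw] at hws
        have key : ∀ i, (Fin.snoc (fun j => w j * s j) (-(∑ j, w j * s j)) : Fin (m + 2) → ℝ)
            i = 0 := by
          rw [affineIndependent_iff_of_fintype] at ha
          apply ha
          · rw [Fin.sum_univ_castSucc]
            simp [Fin.snoc_castSucc, Fin.snoc_last]
          · rw [Finset.weightedVSub_eq_linear_combination]
            · rw [Fin.sum_univ_castSucc]
              simp only [Fin.snoc_castSucc, Fin.snoc_last]
              have expand : ∀ j : Fin (m + 1), (w j * s j) • a j.castSucc
                  = w j • p j - w j • a L + (w j * s j) • a L := by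
                intro j
                rw [hpc j]
                module
              rw [Finset.sum_congr rfl fun j _ => expand j, Finset.sum_add_distrib,
                Finset.sum_sub_distrib, ← Finset.sum_smul, ← Finset.sum_smul, hws, hw]
              module
            · rw [Fin.sum_univ_castSucc]
              simp [Fin.snoc_castSucc, Fin.snoc_last]
        intro j
        have hj := key j.castSucc
        rw [Fin.snoc_castSucc] at hj
        exact (mul_eq_zero.1 hj).resolve_right (hs0 j).ne'
      -- faces of the section
      have hfaces : ∀ j : Fin (m + 1),
          convexHull ℝ (p '' {k | k ≠ j}) ⊆ C j.castSucc ∩ Sig := by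
        intro j
        refine convexHull_min ?_ ((hCv _).inter hSigcv)
        rintro _ ⟨k, hk, rfl⟩
        refine ⟨?_, hpSig k⟩
        have hb : a L ∈ convexHull ℝ (a '' {i | i ≠ j.castSucc}) :=
          subset_convexHull ℝ _ ⟨L, (Fin.castSucc_lt_last j).ne', rfl⟩
        have hak : a k.castSucc ∈ convexHull ℝ (a '' {i | i ≠ j.castSucc}) :=
          subset_convexHull ℝ _ ⟨k.castSucc, fun h => hk (Fin.castSucc_injective _ h), rfl⟩
        have : p k ∈ convexHull ℝ (a '' {i | i ≠ j.castSucc}) := by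
          rw [hpc k]
          exact (convex_convexHull ℝ _) hb hak (by linarith [hs1 k]) (hs0 k).le (by ring)
        exact hface j.castSucc this
      -- cover of the section
      have hcov : convexHull ℝ (Set.range p) ⊆ ⋃ j : Fin (m + 1), (C j.castSucc ∩ Sig) := by
        rw [hSigEq]
        rintro x hx
        obtain ⟨hxS, hxf⟩ := hx
        obtain ⟨_, ⟨i, rfl⟩, hxC⟩ := hcover hxS
        rcases Fin.eq_castSucc_or_eq_last i with ⟨j, rfl⟩ | rfl
        · exact Set.mem_iUnion.2 ⟨j, hxC, ⟨hxS, hxf⟩⟩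
        · exact absurd hxf (hfC x hxC).ne'
      obtain ⟨y, hy⟩ := IH p hp_indep (fun j => C j.castSucc ∩ Sig)
        (fun j => (hCc _).inter (hScp.isClosed.inter (isClosed_eq f.continuous
          continuous_const)))
        (fun j => (hCv _).inter hSigcv)
        (fun j => by rw [hSigEq]; exact Set.inter_subset_right)
        hfaces hcov
      have hyT : y ∈ T := Set.mem_iInter.2 fun j => (Set.mem_iInter.1 hy j).1
      have hyc : f y = c := (Set.mem_iInter.1 hy 0).2.2
      exact absurd hyc (hfT y hyT).ne

end KKM

theorem stmt_12 (n : ℕ) (a : Fin (n + 1) → EuclideanSpace ℝ (Fin n))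
    (ha : AffineIndependent ℝ a)
    (S : Set (EuclideanSpace ℝ (Fin n))) (hS : S = convexHull ℝ (Set.range a))
    (face : Fin (n + 1) → Set (EuclideanSpace ℝ (Fin n)))
    (hface : ∀ i, face i = convexHull ℝ (a '' {j | j ≠ i}))
    (C : Fin (n + 1) → Set (EuclideanSpace ℝ (Fin n)))
    (hCclosed : ∀ i, IsClosed (C i)) (hCconv : ∀ i, Convex ℝ (C i))
    (hCS : ∀ i, C i ⊆ S) (hfaceC : ∀ i, face i ⊆ C i)
    (hcover : S ⊆ ⋃ i, C i) :
    (⋂ i, C i).Nonempty := by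
  subst hS
  exact kkm_convex n a ha C hCclosed hCconv hCS
    (fun i => by rw [← hface i]; exact hfaceC i) hcover
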